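/- Let (X, α) be a probabilistic metric space with respect to a continuous t-norm * on [0,1], and define δ_α(x, A) = inf{ r ∈ [0,∞] | sup_{a∈A} α(x,a,r) = 1 }. Then (X, δ_α) is an approach space; in particular, the triangle inequality δ_α(x, A) ≤ sup_{b∈B} δ_α(b, A) + δ_α(x, B) holds for all x ∈ X and A, B ⊆ X. -/

import Mathlib

open scoped ENNReal

/-- A distance distribution: a map `[0,∞] → [0,1]` with value `0` at `0`, `1` at `∞`,
monotone and left-continuous on `(0,∞)`. -/
structure IsDistanceDistribution (φ : ℝ≥0∞ → ℝ) : Prop where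
  mem : ∀ t, φ t ∈ Set.Icc (0:ℝ) 1
  zero : φ 0 = 0
  top : φ ⊤ = 1
  mono : Monotone φ
  leftCont : ∀ t : ℝ≥0∞, 0 < t → t ≠ ⊤ → φ t = ⨆ s : {s : ℝ≥0∞ // s < t}, φ s.1

/-- A continuous t-norm on the interval `[a,b] ⊆ ℝ`. -/
structure IsContinuousTNorm (a b : ℝ) (m : ℝ → ℝ → ℝ) : Prop where
  mem : ∀ ⦃p q : ℝ⦄, p ∈ Set.Icc a b → q ∈ Set.Icc a b → m p q ∈ Set.Icc a b
  comm : ∀ ⦃p q : ℝ⦄, p ∈ Set.Icc a b → q ∈ Set.Icc a b → m p q = m q p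
  assoc : ∀ ⦃p q r : ℝ⦄, p ∈ Set.Icc a b → q ∈ Set.Icc a b → r ∈ Set.Icc a b →
    m (m p q) r = m p (m q r)
  unit : ∀ ⦃p : ℝ⦄, p ∈ Set.Icc a b → m p b = p
  mono : ∀ ⦃p p' q q' : ℝ⦄, p ∈ Set.Icc a b → p' ∈ Set.Icc a b → q ∈ Set.Icc a b →
    q' ∈ Set.Icc a b → p ≤ p' → q ≤ q' → m p q ≤ m p' q'
  continuous : ContinuousOn (fun x : ℝ × ℝ => m x.1 x.2) (Set.Icc a b ×ˢ Set.Icc a b)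

/-- `α` is a probabilistic metric on `X` with respect to the t-norm `m` on `[0,1]`. -/
structure IsProbMetric {X : Type*} (m : ℝ → ℝ → ℝ) (α : X → X → ℝ≥0∞ → ℝ) : Prop where
  dd : ∀ x y, IsDistanceDistribution (α x y)
  refl : ∀ x (t : ℝ≥0∞), 0 < t → α x x t = 1
  symm : ∀ x y t, α x y t = α y x t
  sep : ∀ x y, (∀ t : ℝ≥0∞, 0 < t → α x y t = 1) → x = y
  triangle : ∀ x y z (r s : ℝ≥0∞), m (α y z r) (α x y s) ≤ α x z (r + s)

/-- The approach distance induced by a probabilistic metric: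
`δ_α(x,A) = inf { r | sup_{a ∈ A} α(x,a,r) = 1 }`. -/
noncomputable def probDist {X : Type*} (α : X → X → ℝ≥0∞ → ℝ) (x : X) (A : Set X) : ℝ≥0∞ :=
  sInf {r : ℝ≥0∞ | sSup ((fun a => α x a r) '' A) = 1}

/-- `δ` is an approach structure on `X`. -/
structure IsApproach {X : Type*} (δ : X → Set X → ℝ≥0∞) : Prop where
  point : ∀ x, δ x {x} = 0
  empty : ∀ x, δ x (∅ : Set X) = ⊤
  union : ∀ x A B, δ x (A ∪ B) = min (δ x A) (δ x B)
  triangle : ∀ x (A B : Set X), δ x A ≤ (⨆ b : B, δ b.1 A) + δ x B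

/-- An approach structure is probabilistic metrizable w.r.t. the t-norm `m`. -/
def ProbMetrizable {X : Type*} (m : ℝ → ℝ → ℝ) (δ : X → Set X → ℝ≥0∞) : Prop :=
  ∃ α : X → X → ℝ≥0∞ → ℝ, IsProbMetric m α ∧ ∀ x A, δ x A = probDist α x A

/-- The minimum t-norm. -/
def minT : ℝ → ℝ → ℝ := fun p q => min p q
/-- The product t-norm. -/
def prodT : ℝ → ℝ → ℝ := fun p q => p * q
/-- The Łukasiewicz t-norm. -/
def lukT : ℝ → ℝ → ℝ := fun p q => max 0 (p + q - 1)

/-- `q⁻`: the largest idempotent element of `m` in `[a, q]`. -/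
noncomputable def idemBelow (a : ℝ) (m : ℝ → ℝ → ℝ) (q : ℝ) : ℝ :=
  sSup {p : ℝ | p ∈ Set.Icc a q ∧ m p p = p}

section Aux
variable {X : Type*} {m : ℝ → ℝ → ℝ} {α : X → X → ℝ≥0∞ → ℝ}

lemma pm_bdd (h : IsProbMetric m α) (x : X) (A : Set X) (r : ℝ≥0∞) :
    BddAbove ((fun a => α x a r) '' A) :=
  ⟨1, fun p hp => by obtain ⟨a, _, rfl⟩ := hp; exact ((h.dd x a).mem r).2⟩

lemma pm_sup_le_one (h : IsProbMetric m α) (x : X) (A : Set X) (r : ℝ≥0∞) :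
    sSup ((fun a => α x a r) '' A) ≤ 1 :=
  Real.sSup_le (fun p hp => by obtain ⟨a, _, rfl⟩ := hp; exact ((h.dd x a).mem r).2) zero_le_one

lemma pm_sup_nonneg (h : IsProbMetric m α) (x : X) (A : Set X) (r : ℝ≥0∞) :
    0 ≤ sSup ((fun a => α x a r) '' A) :=
  Real.sSup_nonneg (fun p hp => by obtain ⟨a, _, rfl⟩ := hp; exact ((h.dd x a).mem r).1)

lemma pm_sup_mono (h : IsProbMetric m α) (x : X) (A : Set X) {r r' : ℝ≥0∞} (hrr' : r ≤ r') :
    sSup ((fun a => α x a r) '' A) ≤ sSup ((fun a => α x a r') '' A) := by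
  refine Real.sSup_le (fun p hp => ?_) (pm_sup_nonneg h x A r')
  obtain ⟨a, ha, rfl⟩ := hp
  exact le_trans ((h.dd x a).mono hrr') (le_csSup (pm_bdd h x A r') ⟨a, ha, rfl⟩)

lemma pm_mem_upward (h : IsProbMetric m α) (x : X) (A : Set X) {r r' : ℝ≥0∞}
    (hr : sSup ((fun a => α x a r) '' A) = 1) (hle : r ≤ r') :
    sSup ((fun a => α x a r') '' A) = 1 :=
  le_antisymm (pm_sup_le_one h x A r') (hr ▸ pm_sup_mono h x A hle)

lemma pm_sup_eq_one_of_lt (h : IsProbMetric m α) {x : X} {A : Set X} {r : ℝ≥0∞}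
    (hr : probDist α x A < r) : sSup ((fun a => α x a r) '' A) = 1 := by
  obtain ⟨r', hr', hlt⟩ := sInf_lt_iff.mp hr
  exact pm_mem_upward h x A hr' hlt.le

lemma pm_exists_gt (h : IsProbMetric m α) {x : X} {A : Set X} {r : ℝ≥0∞} {c : ℝ}
    (hc : c < 1) (hsup : sSup ((fun a => α x a r) '' A) = 1) :
    ∃ a ∈ A, c < α x a r := by
  have hne : ((fun a => α x a r) '' A).Nonempty := by
    rcases A.eq_empty_or_nonempty with rfl | hA
    · simp [Real.sSup_empty] at hsup
    · exact hA.image _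
  obtain ⟨p, hp, hcp⟩ := exists_lt_of_lt_csSup hne (by rw [hsup]; exact hc)
  obtain ⟨a, ha, rfl⟩ := hp
  exact ⟨a, ha, hcp⟩

lemma tnorm_near_one (hm : IsContinuousTNorm 0 1 m) {c : ℝ} (hc : c < 1) :
    ∃ θ : ℝ, θ < 1 ∧ ∀ p q : ℝ, p ∈ Set.Icc (0:ℝ) 1 → q ∈ Set.Icc (0:ℝ) 1 →
      θ ≤ p → θ ≤ q → c < m p q := by
  have h11 : ((1:ℝ), (1:ℝ)) ∈ Set.Icc (0:ℝ) 1 ×ˢ Set.Icc (0:ℝ) 1 := by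
    constructor <;> exact ⟨zero_le_one, le_refl 1⟩
  have hcw := hm.continuous ((1:ℝ),(1:ℝ)) h11
  rw [Metric.continuousWithinAt_iff] at hcw
  obtain ⟨d, hd, hball⟩ := hcw (1 - c) (by linarith)
  refine ⟨max 0 (1 - d/2), ?_, fun p q hp hq hpθ hqθ => ?_⟩
  · exact max_lt one_pos (by linarith)
  · have hdist : dist (p, q) ((1:ℝ),(1:ℝ)) < d := by
      rw [Prod.dist_eq]
      have h1 : dist p 1 < d := by
        rw [Real.dist_eq, abs_lt]
        constructor <;> [linarith [le_trans (le_max_right 0 (1-d/2)) hpθ, hp.2]; linarith [hp.2]]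
      have h2 : dist q 1 < d := by
        rw [Real.dist_eq, abs_lt]
        constructor <;> [linarith [le_trans (le_max_right 0 (1-d/2)) hqθ, hq.2]; linarith [hq.2]]
      exact max_lt h1 h2
    have := hball (x := (p,q)) ⟨hp, hq⟩ hdist
    rw [hm.unit ⟨zero_le_one, le_refl 1⟩, Real.dist_eq, abs_lt] at this
    simp only at this
    linarith [this.1]

end Aux
theorem stmt6 {X : Type*} (m : ℝ → ℝ → ℝ) (hm : IsContinuousTNorm 0 1 m)
    (α : X → X → ℝ≥0∞ → ℝ) (h : IsProbMetric m α) :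
    IsApproach (fun x A => probDist α x A) := by
  constructor
  · -- point
    intro x
    refine le_antisymm ?_ zero_le
    refine le_of_forall_gt_imp_ge_of_dense fun t ht => ?_
    exact sInf_le (by simp [Set.image_singleton, h.refl x t ht])
  · -- empty
    intro x
    have he : {r : ℝ≥0∞ | sSup ((fun a => α x a r) '' (∅ : Set X)) = 1} = ∅ := by
      ext r; simp [Real.sSup_empty]
    simp only [probDist, he, sInf_empty]
  · -- union
    intro x A B
    have key : {r : ℝ≥0∞ | sSup ((fun a => α x a r) '' (A ∪ B)) = 1}
        = {r : ℝ≥0∞ | sSup ((fun a => α x a r) '' A) = 1}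
          ∪ {r : ℝ≥0∞ | sSup ((fun a => α x a r) '' B) = 1} := by
      ext r
      simp only [Set.mem_setOf_eq, Set.mem_union, Set.image_union]
      constructor
      · intro h1
        by_contra hcon
        push_neg at hcon
        have hA : sSup ((fun a => α x a r) '' A) < 1 :=
          lt_of_le_of_ne (pm_sup_le_one h x A r) hcon.1
        have hB : sSup ((fun a => α x a r) '' B) < 1 :=
          lt_of_le_of_ne (pm_sup_le_one h x B r) hcon.2
        have hle : sSup ((fun a => α x a r) '' A ∪ (fun a => α x a r) '' B)
            ≤ max (sSup ((fun a => α x a r) '' A)) (sSup ((fun a => α x a r) '' B)) := by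
          refine Real.sSup_le (fun p hp => ?_)
            (le_trans (pm_sup_nonneg h x A r) (le_max_left _ _))
          rcases hp with hp | hp
          · exact le_trans (le_csSup (pm_bdd h x A r) hp) (le_max_left _ _)
          · exact le_trans (le_csSup (pm_bdd h x B r) hp) (le_max_right _ _)
        rw [h1] at hle
        exact absurd hle (not_le.mpr (max_lt hA hB))
      · intro h1
        have hsub : ∀ C : Set X, sSup ((fun a => α x a r) '' C) = 1 →
            (fun a => α x a r) '' C ⊆ (fun a => α x a r) '' A ∪ (fun a => α x a r) '' B →
            sSup ((fun a => α x a r) '' A ∪ (fun a => α x a r) '' B) = 1 := by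
          intro C hC hCs
          refine le_antisymm ?_ ?_
          · rw [← Set.image_union]
            exact pm_sup_le_one h x (A ∪ B) r
          · rw [← hC]
            refine Real.sSup_le (fun p hp => ?_) ?_
            · refine le_csSup ?_ (hCs hp)
              rw [← Set.image_union]; exact pm_bdd h x (A ∪ B) r
            · rw [← Set.image_union]; exact pm_sup_nonneg h x (A ∪ B) r
        rcases h1 with h1 | h1
        · exact hsub A h1 Set.subset_union_left
        · exact hsub B h1 Set.subset_union_right
    simp only [probDist]
    rw [key, sInf_union]
  · -- triangle
    intro x A B
    set u := ⨆ b : B, probDist α b.1 A with hu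
    set v := probDist α x B with hv
    by_cases huv : u + v = ⊤
    · rw [huv]; exact le_top
    have hu' : u ≠ ⊤ := fun h' => huv (by simp [h'])
    have hv' : v ≠ ⊤ := fun h' => huv (by simp [h'])
    refine le_of_forall_gt_imp_ge_of_dense fun t ht => ?_
    refine sInf_le ?_
    show sSup ((fun a => α x a t) '' A) = 1
    set ε := (t - (u + v)) / 2 with hε
    have hεpos : ε ≠ 0 := by
      refine (ENNReal.div_pos (tsub_pos_of_lt ht).ne' ENNReal.ofNat_ne_top).ne'
    have hr : u < u + ε := ENNReal.lt_add_right hu' hεpos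
    have hs : v < v + ε := ENNReal.lt_add_right hv' hεpos
    have hsum : (u + ε) + (v + ε) ≤ t := by
      have h2 : (u + ε) + (v + ε) = (u + v) + (ε + ε) := by ring
      rw [h2, hε, ENNReal.add_halves, add_tsub_cancel_of_le ht.le]
    have hB1 : sSup ((fun b => α x b (v + ε)) '' B) = 1 := pm_sup_eq_one_of_lt h hs
    have hbA : ∀ b ∈ B, sSup ((fun a => α b a (u + ε)) '' A) = 1 := by
      intro b hb
      refine pm_sup_eq_one_of_lt h (lt_of_le_of_lt ?_ hr)
      exact le_iSup (fun b : B => probDist α b.1 A) ⟨b, hb⟩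
    refine le_antisymm (pm_sup_le_one h x A t) ?_
    refine le_of_forall_lt fun c hc => ?_
    obtain ⟨θ, hθ1, hθ⟩ := tnorm_near_one hm hc
    obtain ⟨b, hb, hbθ⟩ := pm_exists_gt h hθ1 hB1
    obtain ⟨a, ha, haθ⟩ := pm_exists_gt h hθ1 (hbA b hb)
    have htri := h.triangle x b a (u + ε) (v + ε)
    have hmid : c < m (α b a (u + ε)) (α x b (v + ε)) :=
      hθ _ _ ((h.dd b a).mem _) ((h.dd x b).mem _) haθ.le hbθ.le
    have hfin : c < α x a t :=
      lt_of_lt_of_le (lt_of_lt_of_le hmid htri) ((h.dd x a).mono hsum)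
    exact lt_of_lt_of_le hfin (le_csSup (pm_bdd h x A t) ⟨a, ha, rfl⟩)
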